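/- Let N be an orchard network and let S = (N_0, ..., N_s) be a cherry reduction sequence of N with reduced nodes u_0, ..., u_{s-1}. Then the sequence (u_0, ..., u_{s-1}) is a linear extension of the order-dual of the poset T(int N) ordered by reachability; that is, for all internal tree nodes u, v of N, if there is a directed path from v to u in N, then u appears before or at the same position as v in the sequence. -/

import Mathlib

open Set

namespace Phylo

variable {V : Type*}

/-- In-degree of a node in a digraph given by its edge relation. -/
noncomputable def inDeg (N : V → V → Prop) (v : V) : ℕ := {u | N u v}.ncard

/-- Out-degree of a node. -/
noncomputable def outDeg (N : V → V → Prop) (v : V) : ℕ := {w | N v w}.ncard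

/-- Reachability: existence of a directed path. -/
def Reach (N : V → V → Prop) : V → V → Prop := Relation.ReflTransGen N

/-- Leaves: nodes of out-degree 0. -/
def leaves (N : V → V → Prop) : Set V := {v | outDeg N v = 0}

/-- Internal tree nodes, i.e. the set `T(int N)`. -/
def ITN (N : V → V → Prop) : Set V := {v | inDeg N v ≤ 1 ∧ 1 ≤ outDeg N v}

/-- A (rooted) phylogenetic network structure on the digraph `N` with root `ρ`. -/
structure IsPhyloNet (N : V → V → Prop) (ρ : V) : Prop where
  acyclic : ∀ v, ¬ Relation.TransGen N v v
  root_indeg : inDeg N ρ = 0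
  root_connects : ∀ v, Reach N ρ v
  retic_out : ∀ v, 2 ≤ inDeg N v → outDeg N v = 1
  no_elementary : ∀ v, ¬ (inDeg N v = 1 ∧ outDeg N v = 1)

/-- Binarity of a phylogenetic network. -/
structure IsBinary (N : V → V → Prop) (ρ : V) : Prop where
  retic_deg : ∀ v, 2 ≤ inDeg N v → inDeg N v = 2 ∧ outDeg N v = 1
  tree_deg : ∀ v, v ≠ ρ → inDeg N v ≤ 1 → 1 ≤ outDeg N v →
      inDeg N v = 1 ∧ outDeg N v = 2
  root_deg : outDeg N ρ = 2 ∨ outDeg N ρ = 0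

/-- Tree-child: every internal node has a child of tree type (in-degree ≤ 1). -/
def IsTreeChild (N : V → V → Prop) : Prop :=
  ∀ v, 1 ≤ outDeg N v → ∃ w, N v w ∧ inDeg N w ≤ 1

/-- `u` is the tree-node root of a cherry. -/
def IsCherryRoot (N : V → V → Prop) (u : V) : Prop :=
  inDeg N u ≤ 1 ∧ ∃ x y, x ≠ y ∧ N u x ∧ N u y ∧ outDeg N x = 0 ∧ outDeg N y = 0 ∧
    ∀ w, N u w → w = x ∨ w = y

/-- `u` is the tree-node root of a reticulated cherry. -/
def IsRetCherryRoot (N : V → V → Prop) (u : V) : Prop :=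
  inDeg N u ≤ 1 ∧ ∃ h y, h ≠ y ∧ N u h ∧ N u y ∧ 2 ≤ inDeg N h ∧ outDeg N y = 0 ∧
    (∃ x, N h x ∧ outDeg N x = 0 ∧ ∀ w, N h w → w = x) ∧
    ∀ w, N u w → w = h ∨ w = y

/-- Terminal node: root of a cherry or of a reticulated cherry. -/
def IsTerminal (N : V → V → Prop) (u : V) : Prop :=
  IsCherryRoot N u ∨ IsRetCherryRoot N u

/-- Cherry reduction rooted at `u`: remove all descendant edges of `u`
(and hence all strict descendant tree nodes of `u` become isolated/removed). -/
def CR (N : V → V → Prop) (u : V) : V → V → Prop :=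
  fun a b => N a b ∧ ¬ Reach N u a

/-- `IsCRSeq N L` : `L` is the list of reduced nodes of a full cherry reduction
sequence of `N`, ending in a single-node network (no edges left). -/
def IsCRSeq : (V → V → Prop) → List V → Prop
  | N, [] => ∀ a b, ¬ N a b
  | N, u :: us => IsTerminal N u ∧ IsCRSeq (CR N u) us

/-- Orchard networks: those admitting a full cherry reduction sequence. -/
def IsOrchard (N : V → V → Prop) : Prop := ∃ L, IsCRSeq N L

/-- Underlying undirected graph of a digraph. -/
def underlying (N : V → V → Prop) : SimpleGraph V := SimpleGraph.fromRel N

/-- Cover relation of the reachability poset on internal tree nodes. -/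
def Covers (N : V → V → Prop) (u v : V) : Prop :=
  u ∈ ITN N ∧ v ∈ ITN N ∧ u ≠ v ∧ Reach N u v ∧
    ¬ ∃ z ∈ ITN N, z ≠ u ∧ z ≠ v ∧ Reach N u z ∧ Reach N z v

/-- Biconnected set of nodes of an undirected graph. -/
def IsBiconn (G : SimpleGraph V) (B : Set V) : Prop :=
  B.Nonempty ∧ (G.induce B).Preconnected ∧ ∀ v ∈ B, (G.induce (B \ {v})).Preconnected

/-- Blob: maximal biconnected component. -/
def IsBlob (G : SimpleGraph V) (B : Set V) : Prop :=
  IsBiconn G B ∧ ∀ B', IsBiconn G B' → B ⊆ B' → B' = B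

/-- Level of a network: maximum number of reticulations in a blob. -/
noncomputable def level (N : V → V → Prop) : ℕ :=
  sSup {k | ∃ B, IsBlob (underlying N) B ∧ k = (B ∩ {v | 2 ≤ inDeg N v}).ncard}

/-- `H` is a minor of `G`, presented by branch sets. -/
def IsMinorOf {α β : Type*} (H : SimpleGraph β) (G : SimpleGraph α) : Prop :=
  ∃ f : β → Set α,
    (∀ b, (f b).Nonempty) ∧
    (∀ b, (G.induce (f b)).Preconnected) ∧
    (∀ b b', b ≠ b' → Disjoint (f b) (f b')) ∧
    (∀ b b', H.Adj b b' → ∃ x ∈ f b, ∃ y ∈ f b', G.Adj x y)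

/-- A list is a linear extension of the reachability poset on `T(int N)`. -/
def IsLinExtList (N : V → V → Prop) (L : List V) : Prop :=
  L.Nodup ∧ (∀ v, v ∈ L ↔ v ∈ ITN N) ∧
  ∀ (i j : ℕ) (hi : i < L.length) (hj : j < L.length),
    Reach N (L.get ⟨i, hi⟩) (L.get ⟨j, hj⟩) → i ≤ j

/-- A list is a linear extension of the order-dual of the reachability poset. -/
def IsDualLinExtList (N : V → V → Prop) (L : List V) : Prop :=
  L.Nodup ∧ (∀ v, v ∈ L ↔ v ∈ ITN N) ∧
  ∀ (i j : ℕ) (hi : i < L.length) (hj : j < L.length),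
    Reach N (L.get ⟨j, hj⟩) (L.get ⟨i, hi⟩) → i ≤ j

end Phylo

open Phylo

section Aux

variable {V : Type*} [Fintype V] {N : V → V → Prop} {u v : V}

lemma no_out_of_outDeg_zero {x : V} (h : outDeg N x = 0) : ∀ w, ¬ N x w := by
  intro w hw
  have : {w | N x w} = ∅ := (Set.ncard_eq_zero (Set.toFinite _)).mp h
  exact absurd (this ▸ hw) (Set.notMem_empty w)

lemma one_le_outDeg_of_edge {x w : V} (h : N x w) : 1 ≤ outDeg N x := by
  exact (Set.ncard_pos (Set.toFinite _)).mpr ⟨w, h⟩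

lemma outDeg_CR_zero (h : Reach N u v) : outDeg (CR N u) v = 0 := by
  have : {w | CR N u v w} = (∅ : Set V) := by
    ext w; simp only [Set.mem_setOf_eq, Set.mem_empty_iff_false, iff_false]
    rintro ⟨-, hr⟩; exact hr h
  simp [outDeg, this]

lemma not_ITN_CR (h : Reach N u v) : v ∉ ITN (CR N u) := by
  rintro ⟨-, hout⟩
  rw [outDeg_CR_zero h] at hout
  omega

lemma degs_CR_eq (h : ¬ Reach N u v) :
    inDeg (CR N u) v = inDeg N v ∧ outDeg (CR N u) v = outDeg N v := by
  constructor
  · unfold inDeg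
    congr 1
    ext a; simp only [Set.mem_setOf_eq, CR]
    exact ⟨fun ⟨ha, _⟩ => ha, fun ha => ⟨ha, fun hr => h (hr.tail ha)⟩⟩
  · unfold outDeg
    congr 1
    ext w; simp only [Set.mem_setOf_eq, CR]
    exact ⟨fun ⟨ha, _⟩ => ha, fun ha => ⟨ha, h⟩⟩

lemma ITN_CR_iff (h : ¬ Reach N u v) : v ∈ ITN (CR N u) ↔ v ∈ ITN N := by
  obtain ⟨h1, h2⟩ := degs_CR_eq h
  simp [ITN, h1, h2]

lemma reach_CR_of {a b : V} (h : Reach N a b) (hb : ¬ Reach N u b) :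
    Reach (CR N u) a b := by
  induction h with
  | refl => exact Relation.ReflTransGen.refl
  | @tail c d hac hcd ih =>
    have hc : ¬ Reach N u c := fun hr => hb (hr.tail hcd)
    exact (ih hc).tail ⟨hcd, hc⟩

lemma terminal_desc (hterm : IsTerminal N u) (h : Reach N u v) (hne : v ≠ u) :
    v ∉ ITN N := by
  rcases hterm with ⟨hind, x, y, hxy, hux, huy, hlx, hly, hch⟩ |
    ⟨hind, hh, y, hhy, huh, huy, hinh, hly, ⟨x, hhx, hlx, hchx⟩, hch⟩
  · -- cherry
    have key : ∀ w, Reach N u w → w = u ∨ w = x ∨ w = y := by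
      intro w hw
      induction hw with
      | refl => exact Or.inl rfl
      | @tail c d hc hcd ih =>
        rcases ih with rfl | rfl | rfl
        · rcases hch d hcd with rfl | rfl
          · exact Or.inr (Or.inl rfl)
          · exact Or.inr (Or.inr rfl)
        · exact absurd hcd (no_out_of_outDeg_zero hlx d)
        · exact absurd hcd (no_out_of_outDeg_zero hly d)
    rcases key v h with rfl | rfl | rfl
    · exact absurd rfl hne
    · rintro ⟨-, hout⟩; rw [hlx] at hout; omega
    · rintro ⟨-, hout⟩; rw [hly] at hout; omega
  · -- reticulated cherry
    have key : ∀ w, Reach N u w → w = u ∨ w = hh ∨ w = y ∨ w = x := by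
      intro w hw
      induction hw with
      | refl => exact Or.inl rfl
      | @tail c d hc hcd ih =>
        rcases ih with rfl | rfl | rfl | rfl
        · rcases hch d hcd with rfl | rfl
          · exact Or.inr (Or.inl rfl)
          · exact Or.inr (Or.inr (Or.inl rfl))
        · rw [hchx d hcd]; exact Or.inr (Or.inr (Or.inr rfl))
        · exact absurd hcd (no_out_of_outDeg_zero hly d)
        · exact absurd hcd (no_out_of_outDeg_zero hlx d)
    rcases key v h with rfl | rfl | rfl | rfl
    · exact absurd rfl hne
    · rintro ⟨hin, -⟩; omega
    · rintro ⟨-, hout⟩; rw [hly] at hout; omega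
    · rintro ⟨-, hout⟩; rw [hlx] at hout; omega

lemma terminal_ITN (hterm : IsTerminal N u) : u ∈ ITN N := by
  rcases hterm with ⟨hind, x, y, _, hux, _⟩ | ⟨hind, hh, y, _, huh, _⟩
  · exact ⟨hind, one_le_outDeg_of_edge hux⟩
  · exact ⟨hind, one_le_outDeg_of_edge huh⟩

lemma crseq_dual : ∀ (N : V → V → Prop) (L : List V), IsCRSeq N L →
    IsDualLinExtList N L := by
  intro N L
  induction L generalizing N with
  | nil =>
    intro h
    refine ⟨List.nodup_nil, ?_, ?_⟩
    · intro v
      simp only [List.not_mem_nil, false_iff]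
      rintro ⟨-, hout⟩
      have : {w | N v w} = (∅ : Set V) := by
        ext w; simpa using h v w
      rw [outDeg, this] at hout
      simp at hout
    · intro i j hi hj
      simp at hi
  | cons u us ih =>
    rintro ⟨hterm, hrest⟩
    obtain ⟨hnd, hmem, hord⟩ := ih (CR N u) hrest
    have husmem : ∀ v ∈ us, ¬ Reach N u v := by
      intro v hv hr
      exact not_ITN_CR hr ((hmem v).mp hv)
    refine ⟨?_, ?_, ?_⟩
    · refine List.nodup_cons.mpr ⟨?_, hnd⟩
      intro hu
      exact husmem u hu Relation.ReflTransGen.refl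
    · intro v
      simp only [List.mem_cons]
      constructor
      · rintro (rfl | hv)
        · exact terminal_ITN hterm
        · exact (ITN_CR_iff (husmem v hv)).mp ((hmem v).mp hv)
      · intro hv
        by_cases hvu : v = u
        · exact Or.inl hvu
        · refine Or.inr ((hmem v).mpr ?_)
          have hnr : ¬ Reach N u v := fun hr => terminal_desc hterm hr hvu hv
          exact (ITN_CR_iff hnr).mpr hv
    · intro i j hi hj hreach
      match i, j with
      | 0, j => exact Nat.zero_le j
      | Nat.succ k, 0 =>
        exfalso
        simp only [List.get] at hreach
        exact husmem _ (us.get_mem _) hreach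
      | Nat.succ k, Nat.succ m =>
        simp only [List.get] at hreach
        have hk : k < us.length := Nat.lt_of_succ_lt_succ hi
        have hm : m < us.length := Nat.lt_of_succ_lt_succ hj
        have hb : ¬ Reach N u (us.get ⟨k, hk⟩) := husmem _ (us.get_mem _)
        have := hord k m hk hm (reach_CR_of hreach hb)
        omega

end Aux

/-- the word of reduced nodes of any cherry reduction sequence of
an orchard network is a linear extension of the order-dual of the reachability
poset on `T(int N)`. -/
theorem stmt4 {V : Type*} [Fintype V] (N : V → V → Prop) (ρ : V)
    (hphy : IsPhyloNet N ρ) (hbin : IsBinary N ρ) (horch : IsOrchard N)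
    (L : List V) (hL : IsCRSeq N L) :
    IsDualLinExtList N L := by
  exact crseq_dual N L hL
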